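/- Let A = {a_0, a_1, ..., a_k} be a finite set of integers with k ≥ 2, 0 = a_0 < a_1 < ... < a_k and gcd(a_1, ..., a_k) = 1. Then there exist nonnegative integers c and d and finite sets C ⊆ [0, c − 2] and D ⊆ [0, d − 2] of integers such that hA = C ∪ [c, h·a_k − d] ∪ (h·a_k − D) for every integer h ≥ (∑_{i=2}^{k} a_i) − k. -/

import Mathlib

/-- The `h`-fold sumset `hA`: all sums of `h` elements of `A` (with repetition). -/
def hFold (A : Set ℤ) (h : ℕ) : Set ℤ :=
  {n | ∃ f : Fin h → ℤ, (∀ i, f i ∈ A) ∧ ∑ i, f i = n}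

set_option linter.unusedSectionVars false


namespace Stmt12Aux

open Finset

variable (k : ℕ) (A : ℕ → ℕ)

/-- value of a digit vector -/
def val (c : ℕ → ℕ) : ℕ := ∑ j ∈ Finset.Icc 1 (k-1), c j * A j
/-- reflected weight of a digit vector -/
def wt (c : ℕ → ℕ) : ℕ := ∑ j ∈ Finset.Icc 1 (k-1), c j * (A k - A j)
/-- number of summands -/
def cnt (c : ℕ → ℕ) : ℕ := ∑ j ∈ Finset.Icc 1 (k-1), c j

def pm : ℕ := ∑ j ∈ Finset.Icc 1 (k-1), (A (j+1) - 1)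
def Qm : ℕ := ∑ j ∈ Finset.Icc 1 (k-1), (A (j+1) - 1) * A j
def Wm : ℕ := ∑ j ∈ Finset.Icc 1 (k-1), (A (j+1) - 1) * (A k - A j)

def Smem (n : ℕ) : Prop := ∃ c m, n = val k A c + m * A k
def Smem' (v : ℕ) : Prop := ∃ c m, v = wt k A c + m * A k
def Mem (h n : ℕ) : Prop := ∃ c m, n = val k A c + m * A k ∧ cnt k c + m ≤ h
def Mem' (h v : ℕ) : Prop := ∃ c m, v = wt k A c + m * A k ∧ cnt k c + m ≤ h

noncomputable def alpha (r : ℕ) : ℕ := sInf {u | (∃ c, val k A c = u) ∧ u % A k = r % A k}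
noncomputable def mu (r : ℕ) : ℕ := sInf {w | (∃ c, wt k A c = w) ∧ w % A k = r % A k}
noncomputable def maxAlpha : ℕ := (Finset.range (A k)).sup (alpha k A)
noncomputable def maxMu : ℕ := (Finset.range (A k)).sup (mu k A)
noncomputable def cN : ℕ := maxAlpha k A + 1 - A k
noncomputable def dN : ℕ := maxMu k A + 1 - A k

section Basic
variable {k A}
variable (hk : 2 ≤ k) (hinc : ∀ i < k, A i < A (i+1))

lemma A_mono (hinc : ∀ i < k, A i < A (i+1)) : ∀ {i j}, i ≤ j → j ≤ k → A i ≤ A j := by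
  intro i j hij hjk
  induction j with
  | zero => have : i = 0 := by omega
            simp [this]
  | succ m ih =>
    rcases Nat.lt_or_ge i (m+1) with hlt | hge
    · exact le_trans (ih (by omega) (by omega)) (le_of_lt (hinc m (by omega)))
    · have : i = m + 1 := by omega
      simp [this]

lemma A_pos (hinc : ∀ i < k, A i < A (i+1)) : ∀ {j}, 1 ≤ j → j ≤ k → 1 ≤ A j := by
  intro j h1 h2
  have h0 : A 0 < A 1 := hinc 0 (by omega)
  have := A_mono hinc (show 1 ≤ j from h1) h2
  omega

lemma Ak_ge2 (hk : 2 ≤ k) (hinc : ∀ i < k, A i < A (i+1)) : 2 ≤ A k := by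
  have h0 : A 0 < A 1 := hinc 0 (by omega)
  have h1 : A 1 < A 2 := hinc 1 (by omega)
  have := A_mono hinc (show 2 ≤ k from hk) (le_refl k)
  omega

lemma mem_Icc_le {j : ℕ} (hj : j ∈ Finset.Icc 1 (k-1)) : 1 ≤ j ∧ j ≤ k - 1 := by
  rwa [Finset.mem_Icc] at hj

lemma val_add_wt (hinc : ∀ i < k, A i < A (i+1)) (c : ℕ → ℕ) :
    val k A c + wt k A c = cnt k c * A k := by
  rw [val, wt, cnt, ← Finset.sum_add_distrib, Finset.sum_mul]
  apply Finset.sum_congr rfl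
  intro j hj
  obtain ⟨h1, h2⟩ := mem_Icc_le hj
  have hle : A j ≤ A k := A_mono hinc (by omega) (le_refl k)
  rw [← Nat.mul_add, Nat.add_sub_cancel' hle]

lemma Qm_add_Wm (hinc : ∀ i < k, A i < A (i+1)) : Qm k A + Wm k A = pm k A * A k := by
  rw [Qm, Wm, pm, ← Finset.sum_add_distrib, Finset.sum_mul]
  apply Finset.sum_congr rfl
  intro j hj
  obtain ⟨h1, h2⟩ := mem_Icc_le hj
  have hle : A j ≤ A k := A_mono hinc (by omega) (le_refl k)
  rw [← Nat.mul_add, Nat.add_sub_cancel' hle]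

lemma pm_pos (hk : 2 ≤ k) (hinc : ∀ i < k, A i < A (i+1)) : 1 ≤ pm k A := by
  have h1 : (1 : ℕ) ∈ Finset.Icc 1 (k-1) := by simp [Finset.mem_Icc]; omega
  have h2 : 2 ≤ A (1+1) := by
    have h0 : A 0 < A 1 := hinc 0 (by omega)
    have := hinc 1 (by omega); omega
  calc (1:ℕ) ≤ A (1+1) - 1 := by omega
  _ ≤ pm k A := Finset.single_le_sum (f := fun j => A (j+1) - 1) (fun i _ => Nat.zero_le _) h1

lemma digits_val_le (c : ℕ → ℕ) (hd : ∀ j ∈ Finset.Icc 1 (k-1), c j < A (j+1)) :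
    val k A c ≤ Qm k A :=
  Finset.sum_le_sum fun j hj => Nat.mul_le_mul_right _ (by have := hd j hj; omega)

lemma digits_wt_le (c : ℕ → ℕ) (hd : ∀ j ∈ Finset.Icc 1 (k-1), c j < A (j+1)) :
    wt k A c ≤ Wm k A :=
  Finset.sum_le_sum fun j hj => Nat.mul_le_mul_right _ (by have := hd j hj; omega)

lemma val_le_cnt_mul (hinc : ∀ i < k, A i < A (i+1)) (c : ℕ → ℕ) :
    val k A c ≤ cnt k c * A k := by
  have := val_add_wt hinc (c := c); omega

lemma wt_le_cnt_mul (hinc : ∀ i < k, A i < A (i+1)) (c : ℕ → ℕ) :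
    wt k A c ≤ cnt k c * A k := by
  have := val_add_wt hinc (c := c); omega

end Basic

end Stmt12Aux


namespace Stmt12Aux
open Finset

-- Generic weighted-sum update lemmas
lemma sum_update_mul (s : Finset ℕ) (g c : ℕ → ℕ) (j : ℕ) (hj : j ∈ s) (x : ℕ) :
    ∑ i ∈ s, Function.update c j x i * g i = x * g j + ∑ i ∈ s.erase j, c i * g i := by
  rw [← Finset.add_sum_erase _ (fun i => Function.update c j x i * g i) hj]
  congr 1
  · simp
  · apply Finset.sum_congr rfl
    intro i hi
    have : i ≠ j := Finset.ne_of_mem_erase hi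
    simp [Function.update, this]

lemma sum_split_mul (s : Finset ℕ) (g c : ℕ → ℕ) (j : ℕ) (hj : j ∈ s) :
    ∑ i ∈ s, c i * g i = c j * g j + ∑ i ∈ s.erase j, c i * g i :=
  (Finset.add_sum_erase _ _ hj).symm

/-- single-coordinate decrement: if `c j = x + y` then updating `c j := x` drops `y * g j`. -/
lemma sum_update_drop (s : Finset ℕ) (g c : ℕ → ℕ) (j : ℕ) (hj : j ∈ s) (x y : ℕ)
    (hxy : c j = x + y) :
    (∑ i ∈ s, Function.update c j x i * g i) + y * g j = ∑ i ∈ s, c i * g i := by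
  rw [sum_update_mul s g c j hj x, sum_split_mul s g c j hj, hxy]
  ring

/-- exchange: `c j -= B`, `c j' += B'` (j ≠ j'). -/
lemma sum_exchange (s : Finset ℕ) (g c : ℕ → ℕ) (j j' : ℕ) (hj : j ∈ s) (hj' : j' ∈ s)
    (hne : j ≠ j') (e B B' : ℕ) (he : c j = e + B) :
    (∑ i ∈ s, (Function.update (Function.update c j e) j' (c j' + B')) i * g i) + B * g j
      = (∑ i ∈ s, c i * g i) + B' * g j' := by
  have hj'e : j ∈ s.erase j' := Finset.mem_erase.mpr ⟨hne, hj⟩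
  have h1 : Function.update c j e j' = c j' := by
    simp [Function.update, hne.symm]
  rw [sum_update_mul s g _ j' hj' (c j' + B')]
  rw [show (∑ i ∈ s.erase j', Function.update c j e i * g i)
      = e * g j + ∑ i ∈ (s.erase j').erase j, c i * g i from sum_update_mul _ g c j hj'e e]
  rw [sum_split_mul s g c j' hj', sum_split_mul (s.erase j') g c j hj'e, he]
  ring


lemma gcd_bezout (s : Finset ℕ) (f : ℕ → ℕ) :
    ∃ z : ℕ → ℤ, ((s.gcd f : ℕ) : ℤ) = ∑ j ∈ s, z j * (f j : ℤ) := by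
  classical
  induction s using Finset.induction_on with
  | empty => exact ⟨0, by simp⟩
  | insert i s ha ih =>
    obtain ⟨z, hz⟩ := ih
    set g := s.gcd f
    refine ⟨fun j => if j = i then Nat.gcdA (f i) g else Nat.gcdB (f i) g * z j, ?_⟩
    rw [Finset.gcd_insert, Finset.sum_insert ha]
    have hbez := Nat.gcd_eq_gcd_ab (f i) g
    have : GCDMonoid.gcd (f i) g = Nat.gcd (f i) g := rfl
    rw [this]
    simp only [if_pos rfl]
    have hrest : ∑ j ∈ s, (if j = i then Nat.gcdA (f i) g else Nat.gcdB (f i) g * z j) * (f j : ℤ)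
        = Nat.gcdB (f i) g * ∑ j ∈ s, z j * (f j : ℤ) := by
      rw [Finset.mul_sum]
      apply Finset.sum_congr rfl
      intro j hj
      have : j ≠ i := by rintro rfl; exact ha hj
      rw [if_neg this]; ring
    rw [hrest, ← hz, hbez]
    simp only [if_true]
    ring

section Cov
variable {k : ℕ} {A : ℕ → ℕ}

lemma Icc1k_insert (hk : 2 ≤ k) : Finset.Icc 1 k = insert k (Finset.Icc 1 (k-1)) := by
  ext i; simp only [Finset.mem_Icc, Finset.mem_insert]; omega

lemma coverage (hk : 2 ≤ k) (hinc : ∀ i < k, A i < A (i+1))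
    (hg : Finset.gcd (Finset.Icc 1 k) A = 1) (r : ℕ) :
    ∃ c : ℕ → ℕ, val k A c % A k = r % A k := by
  obtain ⟨z, hz⟩ := gcd_bezout (Finset.Icc 1 k) A
  rw [hg] at hz
  have hAk : (0:ℤ) < (A k : ℤ) := by
    have := Ak_ge2 hk hinc; exact_mod_cast by omega
  refine ⟨fun j => ((r : ℤ) * z j % (A k : ℤ)).toNat, ?_⟩
  rw [← ZMod.natCast_eq_natCast_iff']
  have hcast : ∀ j : ℕ, ((((r : ℤ) * z j % (A k : ℤ)).toNat : ℕ) : ZMod (A k))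
      = (((r : ℤ) * z j : ℤ) : ZMod (A k)) := by
    intro j
    have h1 : ((((r : ℤ) * z j % (A k : ℤ)).toNat : ℕ) : ℤ) = (r : ℤ) * z j % (A k : ℤ) :=
      Int.toNat_of_nonneg (Int.emod_nonneg _ (by omega))
    calc ((((r : ℤ) * z j % (A k : ℤ)).toNat : ℕ) : ZMod (A k))
        = (((((r : ℤ) * z j % (A k : ℤ)).toNat : ℕ) : ℤ) : ZMod (A k)) := by push_cast; ring
      _ = ((((r : ℤ) * z j % (A k : ℤ)) : ℤ) : ZMod (A k)) := by rw [h1]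
      _ = (((r : ℤ) * z j : ℤ) : ZMod (A k)) := ZMod.intCast_mod _ _
  have hzz : ((1:ℤ) : ZMod (A k)) = ∑ j ∈ Finset.Icc 1 k, ((z j * (A j : ℤ) : ℤ) : ZMod (A k)) := by
    rw [← Int.cast_sum, ← hz]; push_cast; ring
  rw [val, Nat.cast_sum]
  calc ∑ j ∈ Finset.Icc 1 (k-1),
        ((((r : ℤ) * z j % (A k : ℤ)).toNat * A j : ℕ) : ZMod (A k))
      = ∑ j ∈ Finset.Icc 1 (k-1), (((r : ℤ) * z j : ℤ) : ZMod (A k)) * (A j : ZMod (A k)) := by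
        apply Finset.sum_congr rfl
        intro j hj
        rw [Nat.cast_mul, hcast j]
    _ = ((r:ℤ) : ZMod (A k)) * ∑ j ∈ Finset.Icc 1 (k-1), ((z j * (A j : ℤ) : ℤ) : ZMod (A k)) := by
        rw [Finset.mul_sum]
        apply Finset.sum_congr rfl
        intro j hj
        push_cast
        ring
    _ = ((r:ℤ) : ZMod (A k)) * ∑ j ∈ Finset.Icc 1 k, ((z j * (A j : ℤ) : ℤ) : ZMod (A k)) := by
        rw [Icc1k_insert hk, Finset.sum_insert (by simp [Finset.mem_Icc]; omega)]
        have : ((z k * (A k : ℤ) : ℤ) : ZMod (A k)) = 0 := by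
          push_cast
          rw [ZMod.natCast_self]
          ring
        rw [this, zero_add]
    _ = (r : ZMod (A k)) := by rw [← hzz]; push_cast; ring

end Cov

section Alpha
variable {k : ℕ} {A : ℕ → ℕ}
variable (hk : 2 ≤ k) (hinc : ∀ i < k, A i < A (i+1))
  (hg : Finset.gcd (Finset.Icc 1 k) A = 1)

include hk hinc hg

lemma alphaSet_nonempty (r : ℕ) :
    {u | (∃ c, val k A c = u) ∧ u % A k = r % A k}.Nonempty := by
  obtain ⟨c, hc⟩ := coverage hk hinc hg r
  exact ⟨val k A c, ⟨c, rfl⟩, hc⟩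

lemma alpha_spec (r : ℕ) :
    (∃ c, val k A c = alpha k A r) ∧ alpha k A r % A k = r % A k :=
  Nat.sInf_mem (alphaSet_nonempty hk hinc hg r)

omit hk hinc hg in
lemma alpha_le {r u : ℕ} (h1 : ∃ c, val k A c = u) (h2 : u % A k = r % A k) :
    alpha k A r ≤ u :=
  Nat.sInf_le ⟨h1, h2⟩

omit hk hinc hg in
lemma alpha_congr {r r' : ℕ} (h : r % A k = r' % A k) : alpha k A r = alpha k A r' := by
  unfold alpha
  congr 1
  ext u
  simp [h]

omit hk hinc hg in
lemma Smem_ge_alpha {n : ℕ} (hS : Smem k A n) : alpha k A n ≤ n := by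
  obtain ⟨c, m, rfl⟩ := hS
  have h2 : (val k A c + m * A k) % A k = val k A c % A k := Nat.add_mul_mod_self_right _ _ _
  calc alpha k A (val k A c + m * A k) ≤ val k A c := alpha_le ⟨c, rfl⟩ h2.symm
  _ ≤ val k A c + m * A k := Nat.le_add_right _ _

lemma alpha_le_max (r : ℕ) : alpha k A r ≤ maxAlpha k A := by
  have hAk : 0 < A k := by have := Ak_ge2 hk hinc; omega
  have h1 : alpha k A r = alpha k A (r % A k) :=
    alpha_congr (Nat.mod_mod_of_dvd r dvd_rfl).symm
  rw [h1]
  exact Finset.le_sup (Finset.mem_range.mpr (Nat.mod_lt r hAk))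

/-- count-minimal realizers of `alpha` have bounded digits -/
lemma E1 (r : ℕ) : ∃ c, val k A c = alpha k A r ∧ ∀ j ∈ Finset.Icc 1 (k-1), c j < A (j+1) := by
  have hne : {t | ∃ c, val k A c = alpha k A r ∧ cnt k c = t}.Nonempty := by
    obtain ⟨⟨c, hc⟩, -⟩ := alpha_spec hk hinc hg r
    exact ⟨cnt k c, c, hc, rfl⟩
  obtain ⟨c, hval, hcnt⟩ := Nat.sInf_mem hne
  refine ⟨c, hval, ?_⟩
  by_contra hbad
  push_neg at hbad
  obtain ⟨j, hjmem, hge⟩ := hbad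
  obtain ⟨hj1, hjk⟩ := mem_Icc_le hjmem
  have hAk2 := Ak_ge2 hk hinc
  by_cases hcase : j + 1 ≤ k - 1
  · -- exchange between j and j+1
    obtain ⟨e, he⟩ := Nat.le.dest hge
    have hj1mem : j + 1 ∈ Finset.Icc 1 (k-1) := by simp [Finset.mem_Icc]; omega
    set c' := Function.update (Function.update c j e) (j+1) (c (j+1) + A j) with hc'
    have hval' : val k A c' + A (j+1) * A j = val k A c + A j * A (j+1) :=
      sum_exchange _ A c j (j+1) hjmem hj1mem (by omega) e (A (j+1)) (A j) (by omega)
    have hveq : val k A c' = val k A c := by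
      have : A (j+1) * A j = A j * A (j+1) := Nat.mul_comm _ _
      omega
    have hcnteq : cnt k c' + A (j+1) * 1 = cnt k c + A j * 1 := by
      have h1 : cnt k c' = ∑ i ∈ Finset.Icc 1 (k-1), c' i * (fun _ => 1) i := by
        simp [cnt]
      have h2 : cnt k c = ∑ i ∈ Finset.Icc 1 (k-1), c i * (fun _ => 1) i := by
        simp [cnt]
      rw [h1, h2]
      exact sum_exchange _ (fun _ => 1) c j (j+1) hjmem hj1mem (by omega) e (A (j+1)) (A j)
        (by omega)
    have hlt : A j < A (j+1) := hinc j (by omega)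
    have hcnt' : cnt k c' < cnt k c := by omega
    have : sInf {t | ∃ c, val k A c = alpha k A r ∧ cnt k c = t} ≤ cnt k c' :=
      Nat.sInf_le ⟨c', by rw [hveq, hval], rfl⟩
    omega
  · -- j = k - 1 : drop A k copies of A j
    have hjeq : j = k - 1 := by omega
    have hj1k : j + 1 = k := by omega
    rw [hj1k] at hge
    obtain ⟨e, he⟩ := Nat.le.dest hge
    set c' := Function.update c j e with hc'
    have hval' : val k A c' + A k * A j = val k A c :=
      sum_update_drop _ A c j hjmem e (A k) (by omega)
    have hAj : 1 ≤ A j := A_pos hinc hj1 (by omega)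
    have hlt : val k A c' < val k A c := by nlinarith
    have hmod : val k A c' % A k = val k A c % A k := by
      have : val k A c = val k A c' + A j * A k := by rw [← hval']; ring
      rw [this, Nat.add_mul_mod_self_right]
    have : alpha k A r ≤ val k A c' := by
      apply alpha_le ⟨c', rfl⟩
      rw [hmod, hval]
      exact (alpha_spec hk hinc hg r).2
    omega

lemma maxAlpha_le_Qm : maxAlpha k A ≤ Qm k A := by
  have hAk : 0 < A k := by have := Ak_ge2 hk hinc; omega
  obtain ⟨r0, hr0mem, hr0⟩ := Finset.exists_mem_eq_sup (Finset.range (A k))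
    ⟨0, Finset.mem_range.mpr hAk⟩ (alpha k A)
  obtain ⟨c, hc, hd⟩ := E1 hk hinc hg r0
  show (Finset.range (A k)).sup (alpha k A) ≤ Qm k A
  rw [hr0, ← hc]
  exact digits_val_le c hd

lemma Smem_of_ge_cN {n : ℕ} (hn : cN k A ≤ n) : Smem k A n ∧ alpha k A n ≤ n := by
  have hcN : cN k A = maxAlpha k A + 1 - A k := rfl
  rw [hcN] at hn
  have hspec := alpha_spec hk hinc hg n
  have halpha : alpha k A n ≤ n := by
    by_contra hlt
    push_neg at hlt
    have hd : A k ∣ alpha k A n - n := by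
      rw [← Nat.modEq_iff_dvd' (le_of_lt hlt)]
      exact hspec.2.symm
    obtain ⟨t, ht⟩ := hd
    have ht1 : 1 ≤ t := by
      rcases Nat.eq_zero_or_pos t with h | h
      · subst h; rw [Nat.mul_zero] at ht; omega
      · exact h
    have h1 : n + A k ≤ alpha k A n := by
      have h2 : A k * 1 ≤ A k * t := Nat.mul_le_mul_left _ ht1
      rw [Nat.mul_one] at h2
      omega
    have h2 : alpha k A n ≤ maxAlpha k A := alpha_le_max hk hinc hg n
    omega
  refine ⟨?_, halpha⟩
  have hd : A k ∣ n - alpha k A n := by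
    rw [← Nat.modEq_iff_dvd' halpha]
    exact hspec.2
  obtain ⟨t, ht⟩ := hd
  rw [Nat.mul_comm] at ht
  obtain ⟨c, hc⟩ := hspec.1
  exact ⟨c, t, by rw [hc]; omega⟩

lemma not_Smem_cpred (h1 : 1 ≤ cN k A) : ¬ Smem k A (cN k A - 1) := by
  have hcN : cN k A = maxAlpha k A + 1 - A k := rfl
  have hAk2 := Ak_ge2 hk hinc
  obtain ⟨r0, hr0mem, hr0⟩ := Finset.exists_mem_eq_sup (Finset.range (A k))
    ⟨0, Finset.mem_range.mpr (by omega)⟩ (alpha k A)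
  have hr0' : maxAlpha k A = alpha k A r0 := hr0
  have hge : A k ≤ maxAlpha k A := by omega
  intro hS
  have hle := Smem_ge_alpha hS
  have hcong : alpha k A (cN k A - 1) = alpha k A r0 := by
    apply alpha_congr
    have h2 : cN k A - 1 = alpha k A r0 - A k := by omega
    rw [h2]
    have h3 : alpha k A r0 - A k ≡ alpha k A r0 [MOD A k] := by
      rw [Nat.modEq_iff_dvd' (by omega)]
      exact ⟨1, by omega⟩
    rw [h3]
    exact (alpha_spec hk hinc hg r0).2
  rw [hcong, ← hr0] at hle
  omega

end Alpha

section Mu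
variable {k : ℕ} {A : ℕ → ℕ}
variable (hk : 2 ≤ k) (hinc : ∀ i < k, A i < A (i+1))
  (hg : Finset.gcd (Finset.Icc 1 k) A = 1)

include hk hinc hg

omit hk hg in
lemma wt_modEq_of_val_modEq {c c' : ℕ → ℕ} (hv : val k A c ≡ val k A c' [MOD A k]) :
    wt k A c ≡ wt k A c' [MOD A k] := by
  have e1 : val k A c + wt k A c = cnt k c * A k := val_add_wt hinc c
  have e2 : val k A c' + wt k A c' = cnt k c' * A k := val_add_wt hinc c'
  have h1 : (wt k A c + val k A c) ≡ 0 [MOD A k] := by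
    have : A k ∣ wt k A c + val k A c := ⟨cnt k c, by rw [Nat.mul_comm]; omega⟩
    exact (Nat.modEq_zero_iff_dvd).mpr this
  have h2 : (wt k A c' + val k A c') ≡ 0 [MOD A k] := by
    have : A k ∣ wt k A c' + val k A c' := ⟨cnt k c', by rw [Nat.mul_comm]; omega⟩
    exact (Nat.modEq_zero_iff_dvd).mpr this
  have h3 : wt k A c' + val k A c' ≡ wt k A c' + val k A c [MOD A k] :=
    Nat.ModEq.add_left _ hv.symm
  exact Nat.ModEq.add_right_cancel' (val k A c) ((h1.trans h2.symm).trans h3)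

lemma coverage' (r : ℕ) : ∃ c : ℕ → ℕ, wt k A c % A k = r % A k := by
  have hAk2 := Ak_ge2 hk hinc
  obtain ⟨c, hc⟩ := coverage hk hinc hg ((A k - 1) * r)
  refine ⟨c, ?_⟩
  have h1 : (wt k A c + val k A c) ≡ 0 [MOD A k] := by
    have e1 : val k A c + wt k A c = cnt k c * A k := val_add_wt hinc c
    have : A k ∣ wt k A c + val k A c := ⟨cnt k c, by rw [Nat.mul_comm]; omega⟩
    exact (Nat.modEq_zero_iff_dvd).mpr this
  have h2 : (r + val k A c) ≡ 0 [MOD A k] := by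
    have hc' : val k A c ≡ (A k - 1) * r [MOD A k] := hc
    calc r + val k A c ≡ r + (A k - 1) * r [MOD A k] := Nat.ModEq.add_left r hc'
    _ = A k * r := by
          cases' Nat.exists_eq_add_of_le (by omega : 1 ≤ A k) with x hx
          have hsimp : 1 + x - 1 = x := by omega
          rw [hx, hsimp]
          ring
    _ ≡ 0 [MOD A k] := (Nat.modEq_zero_iff_dvd).mpr ⟨r, rfl⟩
  exact Nat.ModEq.add_right_cancel' (val k A c) (h1.trans h2.symm)

lemma muSet_nonempty (r : ℕ) :
    {w | (∃ c, wt k A c = w) ∧ w % A k = r % A k}.Nonempty := by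
  obtain ⟨c, hc⟩ := coverage' hk hinc hg r
  exact ⟨wt k A c, ⟨c, rfl⟩, hc⟩

lemma mu_spec (r : ℕ) :
    (∃ c, wt k A c = mu k A r) ∧ mu k A r % A k = r % A k :=
  Nat.sInf_mem (muSet_nonempty hk hinc hg r)

omit hk hinc hg in
lemma mu_le {r w : ℕ} (h1 : ∃ c, wt k A c = w) (h2 : w % A k = r % A k) :
    mu k A r ≤ w :=
  Nat.sInf_le ⟨h1, h2⟩

omit hk hinc hg in
lemma mu_congr {r r' : ℕ} (h : r % A k = r' % A k) : mu k A r = mu k A r' := by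
  unfold mu
  congr 1
  ext u
  simp [h]

omit hk hinc hg in
lemma Smem'_ge_mu {v : ℕ} (hS : Smem' k A v) : mu k A v ≤ v := by
  obtain ⟨c, m, rfl⟩ := hS
  have h2 : (wt k A c + m * A k) % A k = wt k A c % A k := Nat.add_mul_mod_self_right _ _ _
  calc mu k A (wt k A c + m * A k) ≤ wt k A c := mu_le ⟨c, rfl⟩ h2.symm
  _ ≤ wt k A c + m * A k := Nat.le_add_right _ _

lemma mu_le_max (r : ℕ) : mu k A r ≤ maxMu k A := by
  have hAk : 0 < A k := by have := Ak_ge2 hk hinc; omega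
  have h1 : mu k A r = mu k A (r % A k) :=
    mu_congr (Nat.mod_mod_of_dvd r dvd_rfl).symm
  rw [h1]
  exact Finset.le_sup (Finset.mem_range.mpr (Nat.mod_lt r hAk))

/-- weight-minimal realizers of `mu` have bounded digits -/
lemma E2 (r : ℕ) : ∃ c, wt k A c = mu k A r ∧ ∀ j ∈ Finset.Icc 1 (k-1), c j < A (j+1) := by
  obtain ⟨⟨c, hwt⟩, hmod⟩ := mu_spec hk hinc hg r
  refine ⟨c, hwt, ?_⟩
  by_contra hbad
  push_neg at hbad
  obtain ⟨j, hjmem, hge⟩ := hbad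
  obtain ⟨hj1, hjk⟩ := mem_Icc_le hjmem
  have hAk2 := Ak_ge2 hk hinc
  have hAj : 1 ≤ A j := A_pos hinc hj1 (by omega)
  have hAjk : A j ≤ A k := A_mono hinc (by omega : j ≤ k) (le_refl k)
  by_cases hcase : j + 1 ≤ k - 1
  · -- exchange between j and j+1
    obtain ⟨e, he⟩ := Nat.le.dest hge
    have hj1mem : j + 1 ∈ Finset.Icc 1 (k-1) := by simp [Finset.mem_Icc]; omega
    have hj1k : A (j+1) ≤ A k := A_mono hinc (by omega : j + 1 ≤ k) (le_refl k)
    have hlt : A j < A (j+1) := hinc j (by omega)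
    set c' := Function.update (Function.update c j e) (j+1) (c (j+1) + A j) with hc'
    have hwt' : wt k A c' + A (j+1) * (A k - A j) = wt k A c + A j * (A k - A (j+1)) :=
      sum_exchange _ (fun i => A k - A i) c j (j+1) hjmem hj1mem (by omega) e (A (j+1)) (A j)
        (by omega)
    have hval' : val k A c' + A (j+1) * A j = val k A c + A j * A (j+1) :=
      sum_exchange _ A c j (j+1) hjmem hj1mem (by omega) e (A (j+1)) (A j) (by omega)
    have hveq : val k A c' = val k A c := by
      have : A (j+1) * A j = A j * A (j+1) := Nat.mul_comm _ _
      omega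
    have hwlt : wt k A c' < wt k A c := by
      have : A j * (A k - A (j+1)) < A (j+1) * (A k - A j) := by
        zify [hj1k, hAjk]
        nlinarith [hAk2, hlt, hAj]
      omega
    have hmod' : wt k A c' % A k = r % A k := by
      have h9 := wt_modEq_of_val_modEq hinc (c := c) (c' := c')
        (by rw [hveq] : val k A c ≡ val k A c' [MOD A k])
      calc wt k A c' % A k = wt k A c % A k := h9.symm
      _ = r % A k := by rw [hwt]; exact hmod
    have : mu k A r ≤ wt k A c' := mu_le ⟨c', rfl⟩ hmod'
    omega
  · -- j = k-1 : drop A k copies of A j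
    have hj1k : j + 1 = k := by omega
    rw [hj1k] at hge
    obtain ⟨e, he⟩ := Nat.le.dest hge
    set c' := Function.update c j e with hc'
    have hwt' : wt k A c' + A k * (A k - A j) = wt k A c :=
      sum_update_drop _ (fun i => A k - A i) c j hjmem e (A k) (by omega)
    have hAjlt : A j < A k := by
      have h5 : A j < A (j+1) := hinc j (by omega)
      rwa [hj1k] at h5
    have hwlt : wt k A c' < wt k A c := by
      have hpos : 0 < A k * (A k - A j) := Nat.mul_pos (by omega) (by omega)
      omega
    have hval' : val k A c' + A k * A j = val k A c :=
      sum_update_drop _ A c j hjmem e (A k) (by omega)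
    have hveq : val k A c = val k A c' + A j * A k := by rw [← hval']; ring
    have hmod2 : val k A c % A k = val k A c' % A k := by
      rw [hveq, Nat.add_mul_mod_self_right]
    have hmod' : wt k A c' % A k = r % A k := by
      have h9 : wt k A c ≡ wt k A c' [MOD A k] := wt_modEq_of_val_modEq hinc hmod2
      calc wt k A c' % A k = wt k A c % A k := h9.symm
      _ = r % A k := by rw [hwt]; exact hmod
    have : mu k A r ≤ wt k A c' := mu_le ⟨c', rfl⟩ hmod'
    omega

end Mu

section Conduct
variable {k : ℕ} {A : ℕ → ℕ}
variable (hk : 2 ≤ k) (hinc : ∀ i < k, A i < A (i+1))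
  (hg : Finset.gcd (Finset.Icc 1 k) A = 1)
include hk hinc hg

lemma maxMu_le_Wm : maxMu k A ≤ Wm k A := by
  have hAk : 0 < A k := by have := Ak_ge2 hk hinc; omega
  obtain ⟨r0, hr0mem, hr0⟩ := Finset.exists_mem_eq_sup (Finset.range (A k))
    ⟨0, Finset.mem_range.mpr hAk⟩ (mu k A)
  obtain ⟨c, hc, hd⟩ := E2 hk hinc hg r0
  show (Finset.range (A k)).sup (mu k A) ≤ Wm k A
  rw [hr0, ← hc]
  exact digits_wt_le c hd

lemma Smem'_of_ge_dN {v : ℕ} (hv : dN k A ≤ v) : Smem' k A v ∧ mu k A v ≤ v := by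
  have hdN : dN k A = maxMu k A + 1 - A k := rfl
  rw [hdN] at hv
  have hspec := mu_spec hk hinc hg v
  have hmu : mu k A v ≤ v := by
    by_contra hlt
    push_neg at hlt
    have hd : A k ∣ mu k A v - v := by
      rw [← Nat.modEq_iff_dvd' (le_of_lt hlt)]
      exact hspec.2.symm
    obtain ⟨t, ht⟩ := hd
    have ht1 : 1 ≤ t := by
      rcases Nat.eq_zero_or_pos t with h | h
      · subst h; rw [Nat.mul_zero] at ht; omega
      · exact h
    have h1 : v + A k ≤ mu k A v := by
      have h2 : A k * 1 ≤ A k * t := Nat.mul_le_mul_left _ ht1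
      rw [Nat.mul_one] at h2
      omega
    have h2 : mu k A v ≤ maxMu k A := mu_le_max hk hinc hg v
    omega
  refine ⟨?_, hmu⟩
  have hd : A k ∣ v - mu k A v := by
    rw [← Nat.modEq_iff_dvd' hmu]
    exact hspec.2
  obtain ⟨t, ht⟩ := hd
  rw [Nat.mul_comm] at ht
  obtain ⟨c, hc⟩ := hspec.1
  exact ⟨c, t, by rw [hc]; omega⟩

lemma not_Smem'_dpred (h1 : 1 ≤ dN k A) : ¬ Smem' k A (dN k A - 1) := by
  have hdN : dN k A = maxMu k A + 1 - A k := rfl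
  have hAk2 := Ak_ge2 hk hinc
  obtain ⟨r0, hr0mem, hr0⟩ := Finset.exists_mem_eq_sup (Finset.range (A k))
    ⟨0, Finset.mem_range.mpr (by omega)⟩ (mu k A)
  have hr0' : maxMu k A = mu k A r0 := hr0
  have hge : A k ≤ maxMu k A := by omega
  intro hS
  have hle := Smem'_ge_mu hS
  have hcong : mu k A (dN k A - 1) = mu k A r0 := by
    apply mu_congr
    have h2 : dN k A - 1 = mu k A r0 - A k := by omega
    rw [h2]
    have h3 : mu k A r0 - A k ≡ mu k A r0 [MOD A k] := by
      rw [Nat.modEq_iff_dvd' (by omega)]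
      exact ⟨1, by omega⟩
    rw [h3]
    exact (mu_spec hk hinc hg r0).2
  rw [hcong, ← hr0'] at hle
  omega

lemma fringeC {n : ℕ} (hS : Smem k A n) (hn : n + 2 ≤ cN k A) :
    Mem k A (pm k A - 1) n := by
  have hAk2 := Ak_ge2 hk hinc
  obtain ⟨c, hc, hd⟩ := E1 hk hinc hg n
  have halpha := Smem_ge_alpha hS
  have hmod : alpha k A n % A k = n % A k := (alpha_spec hk hinc hg n).2
  have hdvd : A k ∣ n - alpha k A n := (Nat.modEq_iff_dvd' halpha).mp hmod
  obtain ⟨t, ht⟩ := hdvd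
  rw [Nat.mul_comm] at ht
  refine ⟨c, t, by rw [hc]; omega, ?_⟩
  have e1 : val k A c + wt k A c = cnt k c * A k := val_add_wt hinc c
  have hwt : wt k A c ≤ Wm k A := digits_wt_le c hd
  have hQ : maxAlpha k A ≤ Qm k A := maxAlpha_le_Qm hk hinc hg
  have hQW : Qm k A + Wm k A = pm k A * A k := Qm_add_Wm hinc
  have hcN : cN k A = maxAlpha k A + 1 - A k := rfl
  rw [hcN] at hn
  have key : (cnt k c + t) * A k = n + wt k A c := by
    have hexp : (cnt k c + t) * A k = cnt k c * A k + t * A k := by ring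
    omega
  by_contra hcon
  push_neg at hcon
  have h9 : pm k A * A k ≤ (cnt k c + t) * A k := Nat.mul_le_mul_right _ (by omega)
  omega

lemma fringeD {v : ℕ} (hS : Smem' k A v) (hv : v + 2 ≤ dN k A) :
    Mem' k A (pm k A - 1) v := by
  have hAk2 := Ak_ge2 hk hinc
  obtain ⟨c, hc, hd⟩ := E2 hk hinc hg v
  have hmu := Smem'_ge_mu hS
  have hmod : mu k A v % A k = v % A k := (mu_spec hk hinc hg v).2
  have hdvd : A k ∣ v - mu k A v := (Nat.modEq_iff_dvd' hmu).mp hmod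
  obtain ⟨t, ht⟩ := hdvd
  rw [Nat.mul_comm] at ht
  refine ⟨c, t, by rw [hc]; omega, ?_⟩
  have e1 : val k A c + wt k A c = cnt k c * A k := val_add_wt hinc c
  have hval : val k A c ≤ Qm k A := digits_val_le c hd
  have hW : maxMu k A ≤ Wm k A := maxMu_le_Wm hk hinc hg
  have hQW : Qm k A + Wm k A = pm k A * A k := Qm_add_Wm hinc
  have hdN : dN k A = maxMu k A + 1 - A k := rfl
  rw [hdN] at hv
  have key : (cnt k c + t) * A k = v + val k A c := by
    have hexp : (cnt k c + t) * A k = cnt k c * A k + t * A k := by ring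
    omega
  by_contra hcon
  push_neg at hcon
  have h9 : pm k A * A k ≤ (cnt k c + t) * A k := Nat.mul_le_mul_right _ (by omega)
  omega

lemma middle {n v : ℕ} (hn : cN k A ≤ n) (hv : dN k A ≤ v) (hmod : (n + v) % A k = 0)
    (hbig : (pm k A - 1) * A k ≤ n + v) :
    ∃ c m, n = val k A c + m * A k ∧ (cnt k c + m) * A k ≤ n + v := by
  have hAk2 := Ak_ge2 hk hinc
  obtain ⟨cs, hwts, hds⟩ := E2 hk hinc hg v
  obtain ⟨hSv, hmuv⟩ := Smem'_of_ge_dN hk hinc hg hv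
  have e1 : val k A cs + wt k A cs = cnt k cs * A k := val_add_wt hinc cs
  have hvalmod : val k A cs % A k = n % A k := by
    have h1 : (val k A cs + wt k A cs) ≡ 0 [MOD A k] :=
      (Nat.modEq_zero_iff_dvd).mpr ⟨cnt k cs, by rw [Nat.mul_comm]; omega⟩
    have h2 : wt k A cs % A k = v % A k := by rw [hwts]; exact (mu_spec hk hinc hg v).2
    have h3 : val k A cs + v ≡ 0 [MOD A k] := by
      have h3a : val k A cs + v ≡ val k A cs + wt k A cs [MOD A k] :=
        Nat.ModEq.add_left _ (Nat.ModEq.symm h2)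
      exact h3a.trans h1
    have h4 : n + v ≡ 0 [MOD A k] := by
      show (n + v) % A k = 0 % A k
      simpa using hmod
    exact Nat.ModEq.add_right_cancel' v (h3.trans h4.symm)
  by_cases hle : val k A cs ≤ n
  · have hdvd : A k ∣ n - val k A cs := (Nat.modEq_iff_dvd' hle).mp hvalmod
    obtain ⟨t, ht⟩ := hdvd
    rw [Nat.mul_comm] at ht
    refine ⟨cs, t, by omega, ?_⟩
    have hexp : (cnt k cs + t) * A k = cnt k cs * A k + t * A k := by ring
    omega
  · push_neg at hle
    have hdvd : A k ∣ val k A cs - n :=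
      (Nat.modEq_iff_dvd' (le_of_lt hle)).mp hvalmod.symm
    obtain ⟨t, ht⟩ := hdvd
    have ht1 : 1 ≤ t := by
      rcases Nat.eq_zero_or_pos t with h | h
      · subst h; rw [Nat.mul_zero] at ht; omega
      · exact h
    have hup : n + A k ≤ val k A cs := by
      have h2 : A k * 1 ≤ A k * t := Nat.mul_le_mul_left _ ht1
      rw [Nat.mul_one] at h2
      omega
    have hQs : val k A cs ≤ Qm k A := digits_val_le cs hds
    -- use the alpha-side realizer
    obtain ⟨c1, hc1, hd1⟩ := E1 hk hinc hg n
    obtain ⟨hSn, halpha⟩ := Smem_of_ge_cN hk hinc hg hn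
    have hmod1 : alpha k A n % A k = n % A k := (alpha_spec hk hinc hg n).2
    have hdvd1 : A k ∣ n - alpha k A n := (Nat.modEq_iff_dvd' halpha).mp hmod1
    obtain ⟨t1, ht1'⟩ := hdvd1
    rw [Nat.mul_comm] at ht1'
    refine ⟨c1, t1, by rw [hc1]; omega, ?_⟩
    have e2 : val k A c1 + wt k A c1 = cnt k c1 * A k := val_add_wt hinc c1
    have hwt1 : wt k A c1 ≤ Wm k A := digits_wt_le c1 hd1
    have hQW : Qm k A + Wm k A = pm k A * A k := Qm_add_Wm hinc
    have hpm : 1 ≤ pm k A := pm_pos hk hinc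
    have hmul : (pm k A - 1) * A k + A k = pm k A * A k := by
      cases' Nat.exists_eq_add_of_le hpm with x hx
      have hsimp : 1 + x - 1 = x := by omega
      rw [hx, hsimp]
      ring
    have hexp : (cnt k c1 + t1) * A k = cnt k c1 * A k + t1 * A k := by ring
    omega

omit hk hg in
lemma Mem_le_mul {h n : ℕ} (hM : Mem k A h n) : n ≤ h * A k := by
  obtain ⟨c, m, rfl, hle⟩ := hM
  have h1 : val k A c ≤ cnt k c * A k := val_le_cnt_mul hinc c
  have h2 : (cnt k c + m) * A k ≤ h * A k := Nat.mul_le_mul_right _ hle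
  have hexp : (cnt k c + m) * A k = cnt k c * A k + m * A k := by ring
  omega

omit hk hg in
lemma Mem'_le_mul {h v : ℕ} (hM : Mem' k A h v) : v ≤ h * A k := by
  obtain ⟨c, m, rfl, hle⟩ := hM
  have h1 : wt k A c ≤ cnt k c * A k := wt_le_cnt_mul hinc c
  have h2 : (cnt k c + m) * A k ≤ h * A k := Nat.mul_le_mul_right _ hle
  have hexp : (cnt k c + m) * A k = cnt k c * A k + m * A k := by ring
  omega

omit hk hg in
lemma Mem_reflect {h n v : ℕ} (hM : Mem k A h n) (hnv : n + v = h * A k) : Mem' k A h v := by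
  obtain ⟨c, m, hrep, hle⟩ := hM
  refine ⟨c, h - (cnt k c + m), ?_, by omega⟩
  have e1 : val k A c + wt k A c = cnt k c * A k := val_add_wt hinc c
  have hh : cnt k c + m + (h - (cnt k c + m)) = h := by omega
  have heq : h * A k = (cnt k c + m + (h - (cnt k c + m))) * A k := by rw [hh]
  have hexp : (cnt k c + m + (h - (cnt k c + m))) * A k
      = cnt k c * A k + m * A k + (h - (cnt k c + m)) * A k := by ring
  omega

omit hk hg in
lemma Mem'_reflect {h v n : ℕ} (hM : Mem' k A h v) (hnv : n + v = h * A k) : Mem k A h n := by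
  obtain ⟨c, m, hrep, hle⟩ := hM
  refine ⟨c, h - (cnt k c + m), ?_, by omega⟩
  have e1 : val k A c + wt k A c = cnt k c * A k := val_add_wt hinc c
  have hh : cnt k c + m + (h - (cnt k c + m)) = h := by omega
  have heq : h * A k = (cnt k c + m + (h - (cnt k c + m))) * A k := by rw [hh]
  have hexp : (cnt k c + m + (h - (cnt k c + m))) * A k
      = cnt k c * A k + m * A k + (h - (cnt k c + m)) * A k := by ring
  omega

omit hk hinc hg in
lemma Mem_mono {h h' n : ℕ} (hM : Mem k A h n) (hh : h ≤ h') : Mem k A h' n := by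
  obtain ⟨c, m, h1, h2⟩ := hM
  exact ⟨c, m, h1, by omega⟩

omit hk hinc hg in
lemma Mem'_mono {h h' v : ℕ} (hM : Mem' k A h v) (hh : h ≤ h') : Mem' k A h' v := by
  obtain ⟨c, m, h1, h2⟩ := hM
  exact ⟨c, m, h1, by omega⟩

theorem natMain (h n : ℕ) (hh : pm k A - 1 ≤ h) :
    Mem k A h n ↔ ((Smem k A n ∧ n + 2 ≤ cN k A) ∨
      (cN k A ≤ n ∧ n + dN k A ≤ h * A k) ∨
      (∃ v, Smem' k A v ∧ v + 2 ≤ dN k A ∧ n + v = h * A k)) := by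
  have hAk2 := Ak_ge2 hk hinc
  constructor
  · intro hM
    have hS : Smem k A n := by obtain ⟨c, m, h1, _⟩ := hM; exact ⟨c, m, h1⟩
    have hle : n ≤ h * A k := Mem_le_mul hinc hM
    by_cases h1 : n + 2 ≤ cN k A
    · exact Or.inl ⟨hS, h1⟩
    by_cases h2 : n + 1 = cN k A
    · exfalso
      apply not_Smem_cpred hk hinc hg (by omega)
      have h3 : cN k A - 1 = n := by omega
      rwa [h3]
    have hcn : cN k A ≤ n := by omega
    have hM' : Mem' k A h (h * A k - n) := Mem_reflect hinc hM (by omega)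
    have hS' : Smem' k A (h * A k - n) := by
      obtain ⟨c, m, h3, _⟩ := hM'; exact ⟨c, m, h3⟩
    by_cases h3 : dN k A ≤ h * A k - n
    · exact Or.inr (Or.inl ⟨hcn, by omega⟩)
    by_cases h4 : (h * A k - n) + 1 = dN k A
    · exfalso
      apply not_Smem'_dpred hk hinc hg (by omega)
      have h5 : dN k A - 1 = h * A k - n := by omega
      rwa [h5]
    · exact Or.inr (Or.inr ⟨h * A k - n, hS', by omega, by omega⟩)
  · rintro (⟨hS, hn2⟩ | ⟨hcn, hnd⟩ | ⟨v, hS', hv2, hnv⟩)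
    · exact Mem_mono (fringeC hk hinc hg hS hn2) hh
    · have h9 : (pm k A - 1) * A k ≤ h * A k := Nat.mul_le_mul_right _ hh
      have hvge : dN k A ≤ h * A k - n := by omega
      have hsum : n + (h * A k - n) = h * A k := by omega
      have hmod : (n + (h * A k - n)) % A k = 0 := by
        rw [hsum]; exact Nat.mul_mod_left h (A k)
      have hbig : (pm k A - 1) * A k ≤ n + (h * A k - n) := by omega
      obtain ⟨c, m, hrep, hcnt⟩ := middle hk hinc hg hcn hvge hmod hbig
      refine ⟨c, m, hrep, ?_⟩
      rw [hsum] at hcnt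
      exact Nat.le_of_mul_le_mul_right hcnt (by omega)
    · exact Mem'_reflect hinc (Mem'_mono (fringeD hk hinc hg hS' hv2) hh) hnv

end Conduct
end Stmt12Aux


namespace Stmt12Aux
open Finset

section Bridge
variable {k : ℕ} {A : ℕ → ℕ} {a : ℕ → ℤ}
variable (hk : 2 ≤ k) (ha0 : a 0 = 0) (hcast : ∀ i ≤ k, (A i : ℤ) = a i)
include hk ha0 hcast

lemma Mem_to_hFold : ∀ h nn, Mem k A h nn → ((nn : ℤ) ∈ hFold {x | ∃ i ≤ k, x = a i} h) := by
  intro h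
  induction h with
  | zero =>
    intro nn hM
    obtain ⟨c, m, hrep, hle⟩ := hM
    have hm : m = 0 := by omega
    have hcnt : cnt k c = 0 := by omega
    have hval : val k A c = 0 := by
      apply Finset.sum_eq_zero
      intro j hj
      have := (Finset.sum_eq_zero_iff).mp hcnt j hj
      simp [this]
    have hnn : nn = 0 := by rw [hrep, hval, hm]; ring
    refine ⟨fun i => i.elim0, fun i => i.elim0, ?_⟩
    simp [hnn]
  | succ h ih =>
    intro nn hM
    obtain ⟨c, m, hrep, hle⟩ := hM
    by_cases hc : cnt k c + m ≤ h
    · obtain ⟨f, hf, hsum⟩ := ih nn ⟨c, m, hrep, hc⟩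
      refine ⟨Fin.cons 0 f, ?_, ?_⟩
      · intro i
        refine Fin.cases ?_ ?_ i
        · exact ⟨0, by omega, ha0.symm⟩
        · exact hf
      · rw [Fin.sum_cons, hsum]; ring
    · have hceq : cnt k c + m = h + 1 := by omega
      rcases m with - | m'
      · -- m = 0, decrement some digit
        have hcnt0 : cnt k c ≠ 0 := by omega
        have hsumne : ∑ j ∈ Finset.Icc 1 (k-1), c j ≠ 0 := hcnt0
        obtain ⟨j, hjmem, hcj⟩ := Finset.exists_ne_zero_of_sum_ne_zero hsumne
        obtain ⟨hj1, hjk⟩ := mem_Icc_le hjmem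
        set c' := Function.update c j (c j - 1) with hc'
        have hval' : val k A c' + 1 * A j = val k A c :=
          sum_update_drop _ A c j hjmem (c j - 1) 1 (by omega)
        have hcnt' : cnt k c' + 1 * 1 = cnt k c := by
          have h1 : cnt k c' = ∑ i ∈ Finset.Icc 1 (k-1), c' i * (fun _ => 1) i := by
            simp [cnt]
          have h2 : cnt k c = ∑ i ∈ Finset.Icc 1 (k-1), c i * (fun _ => 1) i := by
            simp [cnt]
          rw [h1, h2]
          exact sum_update_drop _ (fun _ => 1) c j hjmem (c j - 1) 1 (by omega)
        have hM' : Mem k A h (val k A c' + 0 * A k) := ⟨c', 0, rfl, by omega⟩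
        obtain ⟨f, hf, hsum⟩ := ih _ hM'
        refine ⟨Fin.cons (a j) f, ?_, ?_⟩
        · intro i
          refine Fin.cases ?_ ?_ i
          · exact ⟨j, by omega, rfl⟩
          · exact hf
        · rw [Fin.sum_cons, hsum]
          have hjle : j ≤ k := by omega
          have : nn = (val k A c' + 0 * A k) + A j := by omega
          rw [this]
          push_cast [hcast j hjle]
          ring
      · -- use one copy of A k
        have hM' : Mem k A h (val k A c + m' * A k) := ⟨c, m', rfl, by omega⟩
        obtain ⟨f, hf, hsum⟩ := ih _ hM'
        refine ⟨Fin.cons (a k) f, ?_, ?_⟩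
        · intro i
          refine Fin.cases ?_ ?_ i
          · exact ⟨k, le_refl k, rfl⟩
          · exact hf
        · rw [Fin.sum_cons, hsum]
          have hexp : (m' + 1) * A k = m' * A k + A k := by ring
          have : nn = (val k A c + m' * A k) + A k := by omega
          rw [this]
          push_cast [hcast k (le_refl k)]
          ring

lemma hFold_to_Mem (hA0 : A 0 = 0) (h : ℕ) (n : ℤ)
    (hn : n ∈ hFold {x | ∃ i ≤ k, x = a i} h) :
    ∃ nn : ℕ, n = (nn : ℤ) ∧ Mem k A h nn := by
  classical
  obtain ⟨f, hf, hsum⟩ := hn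
  choose g hgk hga using hf
  set m : ℕ → ℕ := fun i => (Finset.univ.filter (fun j => g j = i)).card with hm
  have hmaps : ∀ j : Fin h, j ∈ Finset.univ → g j ∈ Finset.Icc 0 k := by
    intro j _
    simp [Finset.mem_Icc]
    exact hgk j
  have hcard : ∑ i ∈ Finset.Icc 0 k, m i = h := by
    rw [hm]
    rw [← Finset.card_eq_sum_card_fiberwise hmaps]
    simp
  have hval : ∑ i ∈ Finset.Icc 0 k, (m i : ℤ) * a i = n := by
    rw [← hsum]
    rw [show (∑ i, f i) = ∑ j ∈ Finset.univ, a (g j) from Finset.sum_congr rfl fun j _ => hga j]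
    rw [← Finset.sum_fiberwise_of_maps_to hmaps (fun j => a (g j))]
    apply Finset.sum_congr rfl
    intro i _
    rw [show (∑ j ∈ Finset.univ.filter (fun j => g j = i), a (g j))
        = ∑ j ∈ Finset.univ.filter (fun j => g j = i), a i from
      Finset.sum_congr rfl fun j hj => by rw [(Finset.mem_filter.mp hj).2]]
    rw [Finset.sum_const]
    simp [hm, mul_comm]
  -- now convert to ℕ
  set nn : ℕ := ∑ i ∈ Finset.Icc 0 k, m i * A i with hnn
  have hcastnn : (nn : ℤ) = n := by
    rw [hnn, ← hval]
    push_cast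
    apply Finset.sum_congr rfl
    intro i hi
    rw [hcast i (by simpa [Finset.mem_Icc] using hi)]
  refine ⟨nn, hcastnn.symm, ?_⟩
  -- split the sum
  have hsplit0 : Finset.Icc 0 k = insert 0 (Finset.Icc 1 k) := by
    ext i; simp [Finset.mem_Icc, Finset.mem_insert]; omega
  have h0notin : (0:ℕ) ∉ Finset.Icc 1 k := by simp
  have hknotin : k ∉ Finset.Icc 1 (k-1) := by simp [Finset.mem_Icc]; omega
  have hnn2 : nn = ∑ i ∈ Finset.Icc 1 k, m i * A i := by
    rw [hnn, hsplit0, Finset.sum_insert h0notin, hA0]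
    ring
  have hcnt2 : ∑ i ∈ Finset.Icc 1 k, m i ≤ h := by
    rw [← hcard, hsplit0, Finset.sum_insert h0notin]
    omega
  rw [Icc1k_insert hk, Finset.sum_insert hknotin] at hnn2 hcnt2
  have hval3 : val k A m = ∑ x ∈ Finset.Icc 1 (k-1), m x * A x := rfl
  have hcnt3 : cnt k m = ∑ x ∈ Finset.Icc 1 (k-1), m x := rfl
  exact ⟨m, m k, by omega, by omega⟩

end Bridge

lemma gcd_cast (s : Finset ℕ) (A : ℕ → ℕ) (a : ℕ → ℤ) (hs : ∀ i ∈ s, (A i : ℤ) = a i) :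
    ((s.gcd A : ℕ) : ℤ) = s.gcd a := by
  classical
  induction s using Finset.induction_on with
  | empty => simp
  | insert i s ha ih =>
    rw [Finset.gcd_insert, Finset.gcd_insert]
    have h1 : ((Nat.gcd (A i) (s.gcd A) : ℕ) : ℤ) = GCDMonoid.gcd ((A i : ℤ)) ((s.gcd A : ℕ) : ℤ) := by
      rw [← Int.coe_gcd]
      norm_cast
    have h2 : GCDMonoid.gcd (A i) (s.gcd A) = Nat.gcd (A i) (s.gcd A) := rfl
    rw [h2, h1, hs i (Finset.mem_insert_self i s), ih (fun j hj => hs j (Finset.mem_insert_of_mem hj))]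

end Stmt12Aux

open Stmt12Aux in
theorem stmt12 (k : ℕ) (hk : 2 ≤ k) (a : ℕ → ℤ) (ha0 : a 0 = 0)
    (hinc : ∀ i < k, a i < a (i + 1))
    (hgcd : Finset.gcd (Finset.Icc 1 k) a = 1) :
    ∃ c d : ℤ, 0 ≤ c ∧ 0 ≤ d ∧
      ∃ C D : Finset ℤ,
        (↑C : Set ℤ) ⊆ Set.Icc 0 (c - 2) ∧ (↑D : Set ℤ) ⊆ Set.Icc 0 (d - 2) ∧
        ∀ h : ℕ, (∑ i ∈ Finset.Icc 2 k, a i) - (k : ℤ) ≤ (h : ℤ) →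
          hFold {x | ∃ i ≤ k, x = a i} h =
            ↑C ∪ Set.Icc c ((h : ℤ) * a k - d) ∪ (fun x => (h : ℤ) * a k - x) '' ↑D := by
  classical
  have ha_nn : ∀ i, i ≤ k → 0 ≤ a i := by
    intro i hi
    induction i with
    | zero => simp [ha0]
    | succ n ih =>
      have h1 := ih (by omega)
      have h2 := hinc n (by omega)
      omega
  set A : ℕ → ℕ := fun i => (a i).toNat with hA
  have hcast : ∀ i ≤ k, (A i : ℤ) = a i := fun i hi => Int.toNat_of_nonneg (ha_nn i hi)
  have hA0 : A 0 = 0 := by simp [hA, ha0]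
  have hAinc : ∀ i < k, A i < A (i+1) := by
    intro i hi
    have h1 := hinc i hi
    have h2 := ha_nn i (by omega)
    have h3 := ha_nn (i+1) (by omega)
    simp only [hA]
    omega
  have hgcdN : Finset.gcd (Finset.Icc 1 k) A = 1 := by
    have h1 : ((Finset.gcd (Finset.Icc 1 k) A : ℕ) : ℤ) = Finset.gcd (Finset.Icc 1 k) a :=
      gcd_cast _ _ _ (fun i hi => hcast i (by simpa [Finset.mem_Icc] using (Finset.mem_Icc.mp hi).2))
    rw [hgcd] at h1
    exact_mod_cast h1
  have hAk2 : 2 ≤ A k := Ak_ge2 hk hAinc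
  have hhkcast : ∀ h : ℕ, ((h * A k : ℕ) : ℤ) = (h : ℤ) * a k := by
    intro h
    push_cast
    rw [hcast k (le_refl k)]
  refine ⟨(cN k A : ℤ), (dN k A : ℤ), Int.natCast_nonneg _, Int.natCast_nonneg _,
    ((Finset.range (cN k A)).filter (fun x => Smem k A x ∧ x + 2 ≤ cN k A)).image
      (fun x : ℕ => (x : ℤ)),
    ((Finset.range (dN k A)).filter (fun x => Smem' k A x ∧ x + 2 ≤ dN k A)).image
      (fun x : ℕ => (x : ℤ)), ?_, ?_, ?_⟩
  · intro x hx
    simp only [Finset.coe_image, Set.mem_image, Finset.mem_coe, Finset.mem_filter,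
      Finset.mem_range] at hx
    obtain ⟨nn, ⟨-, -, h2⟩, rfl⟩ := hx
    constructor
    · exact Int.natCast_nonneg _
    · have : (nn : ℤ) + 2 ≤ (cN k A : ℤ) := by exact_mod_cast h2
      omega
  · intro x hx
    simp only [Finset.coe_image, Set.mem_image, Finset.mem_coe, Finset.mem_filter,
      Finset.mem_range] at hx
    obtain ⟨nn, ⟨-, -, h2⟩, rfl⟩ := hx
    constructor
    · exact Int.natCast_nonneg _
    · have : (nn : ℤ) + 2 ≤ (dN k A : ℤ) := by exact_mod_cast h2
      omega
  · intro h hh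
    -- threshold conversion
    have hpm : pm k A - 1 ≤ h := by
      have him : (Finset.Icc 1 (k-1)).image (· + 1) = Finset.Icc 2 k := by
        rw [Finset.image_add_right_Icc]
        congr 1
        omega
      have hsum1 : ∑ i ∈ Finset.Icc 2 k, a i = ∑ j ∈ Finset.Icc 1 (k-1), a (j + 1) := by
        rw [← him, Finset.sum_image (by intro x _ y _ hxy; simp only at hxy; omega)]
      have hsum2 : (pm k A : ℤ) = ∑ j ∈ Finset.Icc 1 (k-1), (a (j+1) - 1) := by
        rw [pm, Nat.cast_sum]
        apply Finset.sum_congr rfl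
        intro j hj
        obtain ⟨hj1, hjk⟩ := mem_Icc_le hj
        have hA1 : 1 ≤ A (j+1) := A_pos hAinc (by omega) (by omega)
        rw [Nat.cast_sub hA1, hcast (j+1) (by omega)]
        norm_num
      have hsum3 : ∑ j ∈ Finset.Icc 1 (k-1), (a (j+1) - 1)
          = (∑ j ∈ Finset.Icc 1 (k-1), a (j+1)) - (k - 1 : ℤ) := by
        rw [Finset.sum_sub_distrib]
        simp [Nat.card_Icc]
        omega
      have hfin : (pm k A : ℤ) - 1 ≤ (h : ℤ) := by
        rw [hsum2, hsum3, ← hsum1]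
        omega
      omega
    ext n
    constructor
    · intro hn
      obtain ⟨nn, rfl, hM⟩ := hFold_to_Mem hk ha0 hcast hA0 h _ hn
      rcases (natMain hk hAinc hgcdN h nn hpm).mp hM with ⟨hS, h2⟩ | ⟨h1, h2⟩ | ⟨v, hS', hv2, hnv⟩
      · left; left
        rw [Finset.mem_coe, Finset.mem_image]
        exact ⟨nn, Finset.mem_filter.mpr ⟨Finset.mem_range.mpr (by omega), hS, h2⟩, rfl⟩
      · left; right
        rw [Set.mem_Icc]
        refine ⟨by exact_mod_cast h1, ?_⟩
        have h3 : ((nn + dN k A : ℕ) : ℤ) ≤ ((h * A k : ℕ) : ℤ) := by exact_mod_cast h2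
        rw [hhkcast h] at h3
        push_cast at h3
        omega
      · right
        rw [Set.mem_image]
        refine ⟨(v : ℤ), ?_, ?_⟩
        · rw [Finset.mem_coe, Finset.mem_image]
          exact ⟨v, Finset.mem_filter.mpr ⟨Finset.mem_range.mpr (by omega), hS', hv2⟩, rfl⟩
        · have h3 : ((nn + v : ℕ) : ℤ) = ((h * A k : ℕ) : ℤ) := by exact_mod_cast hnv
          rw [hhkcast h] at h3
          push_cast at h3
          omega
    · intro hn
      rcases hn with (hC | hIcc) | hImg
      · rw [Finset.mem_coe, Finset.mem_image] at hC
        obtain ⟨nn, hmem, rfl⟩ := hC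
        obtain ⟨-, hS, h2⟩ := Finset.mem_filter.mp hmem
        exact Mem_to_hFold hk ha0 hcast h nn
          ((natMain hk hAinc hgcdN h nn hpm).mpr (Or.inl ⟨hS, h2⟩))
      · rw [Set.mem_Icc] at hIcc
        obtain ⟨hn1, hn2⟩ := hIcc
        have h0n : 0 ≤ n := le_trans (Int.natCast_nonneg _) hn1
        set nn := n.toNat with hnn
        have hneq : n = (nn : ℤ) := (Int.toNat_of_nonneg h0n).symm
        have hcn : cN k A ≤ nn := by omega
        have hnd : nn + dN k A ≤ h * A k := by
          have h3 : n ≤ ((h * A k : ℕ) : ℤ) - (dN k A : ℤ) := by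
            rw [hhkcast h]; omega
          omega
        rw [hneq]
        exact Mem_to_hFold hk ha0 hcast h nn
          ((natMain hk hAinc hgcdN h nn hpm).mpr (Or.inr (Or.inl ⟨hcn, hnd⟩)))
      · rw [Set.mem_image] at hImg
        obtain ⟨x, hxD, hxeq⟩ := hImg
        rw [Finset.mem_coe, Finset.mem_image] at hxD
        obtain ⟨v, hvmem, rfl⟩ := hxD
        obtain ⟨-, hS', hv2⟩ := Finset.mem_filter.mp hvmem
        -- v is small compared to h * A k
        have hW : maxMu k A ≤ Wm k A := maxMu_le_Wm hk hAinc hgcdN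
        have hQW : Qm k A + Wm k A = pm k A * A k := Qm_add_Wm hAinc
        have hdN : dN k A = maxMu k A + 1 - A k := rfl
        have hpm1 : 1 ≤ pm k A := pm_pos hk hAinc
        have hmul : (pm k A - 1) * A k + A k = pm k A * A k := by
          cases' Nat.exists_eq_add_of_le hpm1 with x hx
          have hsimp : 1 + x - 1 = x := by omega
          rw [hx, hsimp]
          ring
        have h9 : (pm k A - 1) * A k ≤ h * A k := Nat.mul_le_mul_right _ hpm
        have hvle : v ≤ h * A k := by omega
        have hnv : (h * A k - v) + v = h * A k := by omega
        have hMem : Mem k A h (h * A k - v) :=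
          (natMain hk hAinc hgcdN h _ hpm).mpr (Or.inr (Or.inr ⟨v, hS', hv2, hnv⟩))
        have hfold := Mem_to_hFold hk ha0 hcast h _ hMem
        have hneq : n = ((h * A k - v : ℕ) : ℤ) := by
          rw [← hxeq]
          rw [Nat.cast_sub hvle, hhkcast h]
        rw [hneq]
        exact hfold
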